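/- arXiv:2211.10500 — 2 statements merged into one kernel-verified Lean document; each statement's English description precedes it below -/
import Mathlib

section
/- Let φ_1,…,φ_r be symmetric polynomials of the shape φ_j(z) = a_j σ_{k_j}(z) − Σ_{l < k_j, l ∈ R} b_{jl} σ_l(z) with a_j nonzero integers and b_{jl} integers. Suppose x, y ∈ ℤ^k satisfy φ_j(x) = φ_j(y) for 1 ≤ j ≤ r, and set h_l = σ_l(x) − σ_l(y) for l ∈ R. Then for each index j with 1 ≤ j ≤ k one has A·∏_{i=1}^k (x_i − y_j) = Ψ(−y_j; h). -/
open Finset Asymptotics Filter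

/-- The elementary symmetric polynomial `σ_l` evaluated at the integer tuple `x`. -/
def esymm (k l : ℕ) (x : Fin k → ℤ) : ℤ :=
  ∑ s ∈ Finset.powersetCard l (Finset.univ : Finset (Fin k)), ∏ i ∈ s, x i

/-- The number of pairs `(x, y)` of integer `k`-tuples with all entries in `[1, X]`
satisfying the relation `P`. -/
noncomputable def pairCount (k X : ℕ) (P : (Fin k → ℤ) → (Fin k → ℤ) → Prop) : ℕ :=
  Nat.card {p : (Fin k → ℤ) × (Fin k → ℤ) //
    (∀ i, 1 ≤ p.1 i ∧ p.1 i ≤ (X : ℤ)) ∧ (∀ i, 1 ≤ p.2 i ∧ p.2 i ≤ (X : ℤ)) ∧ P p.1 p.2}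

/-- `T_k(X)`: the number of pairs `(x, y)` of integer `k`-tuples with entries in `[1, X]`
for which `y` is a permutation of `x`. -/
noncomputable def permCount (k X : ℕ) : ℕ :=
  pairCount k X (fun x y => ∃ π : Equiv.Perm (Fin k), y = x ∘ π)

/-- The complementary set of exponents `ℛ = {1,…,k} \ {k_1,…,k_r}`. -/
def compSet (k r : ℕ) (kk : Fin r → ℕ) : Finset ℕ :=
  Finset.Icc 1 k \ Finset.image kk Finset.univ

/-- The auxiliary polynomial `Ψ(t; h) = Σ_{l∈ℛ} h_l ψ_l(t)`, where
`ψ_l(t) = A t^{k−l} + Σ_{j : k_j > l} c_j b_{jl} t^{k−k_j}`, `A = a_1 ⋯ a_r` and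
`c_j = A / a_j`. -/
def Psi (k r : ℕ) (kk : Fin r → ℕ) (a : Fin r → ℤ) (b : Fin r → ℕ → ℤ)
    (h : ℕ → ℤ) (t : ℤ) : ℤ :=
  ∑ l ∈ compSet k r kk, h l *
    ((∏ j, a j) * t ^ (k - l) +
      ∑ j ∈ Finset.univ.filter (fun j => l < kk j),
        (∏ i ∈ Finset.univ.erase j, a i) * b j l * t ^ (k - kk j))

lemma prod_add_esymm (k : ℕ) (x : Fin k → ℤ) (t : ℤ) :
    ∏ i, (x i + t) = ∑ l ∈ Finset.range (k + 1), esymm k l x * t ^ (k - l) := by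
  rw [Finset.prod_add]
  rw [Finset.sum_powerset]
  simp only [Finset.card_univ, Fintype.card_fin]
  refine Finset.sum_congr rfl fun l hl => ?_
  rw [esymm, Finset.sum_mul]
  refine Finset.sum_congr rfl fun s hs => ?_
  have hcard : s.card = l := (Finset.mem_powersetCard.mp hs).2
  rw [Finset.prod_const, Finset.card_sdiff_of_subset (Finset.subset_univ s),
    Finset.card_univ, Fintype.card_fin, hcard]


/-- The relation (2.8). If `x, y ∈ ℤ^k` satisfy `φ_j(x) = φ_j(y)` for `1 ≤ j ≤ r`, where
`φ_j(z) = a_j σ_{k_j}(z) − Σ_{l < k_j, l ∈ ℛ} b_{jl} σ_l(z)`, and `h_l = σ_l(x) − σ_l(y)`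
for `l ∈ ℛ`, then `A ∏_{i=1}^k (x_i − y_j) = Ψ(−y_j; h)` for each `1 ≤ j ≤ k`. -/
theorem multiplicative_relation_evaluated (k r : ℕ) (hr : 0 < r) (kk : Fin r → ℕ)
    (hmono : StrictMono kk) (hfirst : 1 ≤ kk ⟨0, hr⟩)
    (hlast : kk ⟨r - 1, Nat.sub_lt hr Nat.one_pos⟩ = k)
    (a : Fin r → ℤ) (ha : ∀ j, a j ≠ 0) (b : Fin r → ℕ → ℤ)
    (x y : Fin k → ℤ)
    (heq : ∀ j,
      a j * esymm k (kk j) x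
          - ∑ l ∈ (compSet k r kk).filter (fun l => l < kk j), b j l * esymm k l x =
        a j * esymm k (kk j) y
          - ∑ l ∈ (compSet k r kk).filter (fun l => l < kk j), b j l * esymm k l y)
    (h : ℕ → ℤ) (hh : ∀ l ∈ compSet k r kk, h l = esymm k l x - esymm k l y) :
    ∀ j : Fin k,
      (∏ i, a i) * (∏ i, (x i - y j)) = Psi k r kk a b h (-(y j)) := by
  intro j
  set t : ℤ := -(y j) with ht
  set R := compSet k r kk with hR
  set A : ℤ := ∏ i, a i with hA
  set d : ℕ → ℤ := fun l => esymm k l x - esymm k l y with hd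
  have hx : ∏ i, (x i - y j) = ∑ l ∈ Finset.range (k + 1), esymm k l x * t ^ (k - l) := by
    simpa [sub_eq_add_neg] using prod_add_esymm k x t
  have hy0 : (0 : ℤ) = ∑ l ∈ Finset.range (k + 1), esymm k l y * t ^ (k - l) := by
    rw [← prod_add_esymm k y t]
    exact (Finset.prod_eq_zero (Finset.mem_univ j) (by simp [ht])).symm
  have main : A * ∏ i, (x i - y j)
      = ∑ l ∈ Finset.range (k + 1), A * d l * t ^ (k - l) := by
    rw [hx]
    have : ∑ l ∈ Finset.range (k + 1), A * d l * t ^ (k - l)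
        = A * ∑ l ∈ Finset.range (k + 1), esymm k l x * t ^ (k - l)
          - A * ∑ l ∈ Finset.range (k + 1), esymm k l y * t ^ (k - l) := by
      rw [Finset.mul_sum, Finset.mul_sum, ← Finset.sum_sub_distrib]
      refine Finset.sum_congr rfl fun l _ => ?_
      simp only [hd]; ring
    rw [this, ← hy0, mul_zero, sub_zero]
  rw [main]
  -- split off l = 0
  have hrange : Finset.range (k + 1) = insert 0 (Finset.Icc 1 k) := by
    ext n; simp [Finset.mem_range, Finset.mem_Icc]; omega
  have h0 : d 0 = 0 := by simp [hd, esymm]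
  rw [hrange, Finset.sum_insert (by simp), h0, mul_zero, zero_mul, zero_add]
  -- split Icc 1 k into R and image kk
  have hsub : Finset.image kk Finset.univ ⊆ Finset.Icc 1 k := by
    intro n hn
    simp only [Finset.mem_image, Finset.mem_univ, true_and] at hn
    obtain ⟨i, rfl⟩ := hn
    refine Finset.mem_Icc.mpr ⟨le_trans hfirst (hmono.monotone ?_), ?_⟩
    · exact Fin.mk_le_of_le_val (Nat.zero_le _)
    · rw [← hlast]
      exact hmono.monotone (by rw [Fin.le_def]; exact Nat.le_sub_one_of_lt i.isLt)
  have hIcc : Finset.Icc 1 k = R ∪ Finset.image kk Finset.univ :=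
    (Finset.sdiff_union_of_subset hsub).symm
  have hdisj : Disjoint R (Finset.image kk Finset.univ) := Finset.sdiff_disjoint
  rw [hIcc, Finset.sum_union hdisj,
    Finset.sum_image (fun i _ i' _ hij => hmono.injective hij)]
  -- rewrite the image part using heq
  have key : ∀ j' : Fin r, A * d (kk j')
      = ∑ l ∈ R.filter (fun l => l < kk j'),
          (∏ i ∈ Finset.univ.erase j', a i) * b j' l * d l := by
    intro j'
    have h1 : a j' * d (kk j') = ∑ l ∈ R.filter (fun l => l < kk j'), b j' l * d l := by
      have h2 := heq j'
      have e1 : ∑ l ∈ R.filter (fun l => l < kk j'), b j' l * d l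
          = ∑ l ∈ R.filter (fun l => l < kk j'), b j' l * esymm k l x
            - ∑ l ∈ R.filter (fun l => l < kk j'), b j' l * esymm k l y := by
        rw [← Finset.sum_sub_distrib]
        exact Finset.sum_congr rfl fun l _ => by simp only [hd]; ring
      rw [e1]
      simp only [hd, hR]
      linarith
    have hA' : A = (∏ i ∈ Finset.univ.erase j', a i) * a j' := by
      rw [hA, ← Finset.prod_erase_mul _ _ (Finset.mem_univ j')]
    calc A * d (kk j') = (∏ i ∈ Finset.univ.erase j', a i) * (a j' * d (kk j')) := by
            rw [hA']; ring
      _ = _ := by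
            rw [h1, Finset.mul_sum]
            exact Finset.sum_congr rfl fun l _ => by ring
  have imgpart : ∑ j' : Fin r, A * d (kk j') * t ^ (k - kk j')
      = ∑ l ∈ R, ∑ j' ∈ Finset.univ.filter (fun j' => l < kk j'),
          (∏ i ∈ Finset.univ.erase j', a i) * b j' l * d l * t ^ (k - kk j') := by
    have : ∀ j' : Fin r, A * d (kk j') * t ^ (k - kk j')
        = ∑ l ∈ R.filter (fun l => l < kk j'),
            (∏ i ∈ Finset.univ.erase j', a i) * b j' l * d l * t ^ (k - kk j') := by
      intro j'; rw [key j', Finset.sum_mul]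
    rw [Finset.sum_congr rfl fun j' _ => this j']
    simp only [Finset.sum_filter]
    exact Finset.sum_comm
  rw [imgpart, ← Finset.sum_add_distrib]
  -- match with Psi
  rw [Psi]
  refine Finset.sum_congr rfl fun l hl => ?_
  rw [hh l hl]
  rw [mul_add, Finset.mul_sum]
  congr 1
  · simp only [hd]; ring
  · exact Finset.sum_congr rfl fun j' _ => by simp only [hd]; ring
end

section
/- Let φ_1,…,φ_r be symmetric polynomials of the shape φ_j(z) = a_j σ_{k_j}(z) − Σ_{l < k_j, l ∈ R} b_{jl} σ_l(z) with a_j nonzero integers and b_{jl} integers, with degrees k_1,…,k_r satisfying 1 ≤ k_1 < k_2 < … < k_r = k. Let T_k^†(X;φ) denote the number of non-diagonal solutions, that is, pairs (x,y) with 1 ≤ x_i, y_i ≤ X satisfying φ_j(x) = φ_j(y) (1 ≤ j ≤ r), for which there exists an index j with 1 ≤ j ≤ k such that y_j ∉ {x_1,…,x_k} or x_j ∉ {y_1,…,y_k}. Then for each ε > 0, T_k^†(X;φ) ≪ X^{w(φ)+1+ε}. -/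
open Finset Asymptotics Filter

section Poly
open Polynomial
lemma esymm_eq_multiset (k l : ℕ) (x : Fin k → ℤ) :
    esymm k l x = (Multiset.map x Finset.univ.val).esymm l :=
  (Finset.esymm_map_val x Finset.univ l).symm

lemma card_multiset (k : ℕ) (x : Fin k → ℤ) :
    Multiset.card (Multiset.map x Finset.univ.val) = k := by
  simp

lemma vieta (k : ℕ) (x : Fin k → ℤ) (v : ℤ) :
    ∏ i, (v + x i) = ∑ l ∈ Finset.range (k+1), esymm k l x * v^(k-l) := by
  set s := Multiset.map x Finset.univ.val with hs
  have hcard : Multiset.card s = k := card_multiset k x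
  have h := Multiset.prod_X_add_C_eq_sum_esymm s
  have h2 := congrArg (Polynomial.eval v) h
  rw [Polynomial.eval_multiset_prod, Polynomial.eval_finset_sum] at h2
  simp only [Polynomial.eval_mul, Polynomial.eval_pow, Polynomial.eval_C,
    Polynomial.eval_X, hcard] at h2
  rw [hs, Multiset.map_map] at h2
  simp only [Function.comp, Polynomial.eval_add, Polynomial.eval_X, Polynomial.eval_C] at h2
  rw [Multiset.map_map] at h2
  simp only [Function.comp] at h2
  rw [Finset.prod_eq_multiset_prod]
  rw [h2]
  exact Finset.sum_congr rfl fun l _ => by rw [esymm_eq_multiset]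

lemma multiset_eq_of_esymm_eq (k : ℕ) (x y : Fin k → ℤ)
    (h : ∀ l, l ≤ k → esymm k l x = esymm k l y) :
    Multiset.map x Finset.univ.val = Multiset.map y Finset.univ.val := by
  set sx := Multiset.map x Finset.univ.val with hsx
  set sy := Multiset.map y Finset.univ.val with hsy
  have hcx : Multiset.card sx = k := card_multiset k x
  have hcy : Multiset.card sy = k := card_multiset k y
  have hprod : (sx.map fun r => X + C r).prod = (sy.map fun r => X + C r).prod := by
    rw [Multiset.prod_X_add_C_eq_sum_esymm, Multiset.prod_X_add_C_eq_sum_esymm, hcx, hcy]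
    apply Finset.sum_congr rfl
    intro l hl
    rw [← esymm_eq_multiset, ← esymm_eq_multiset, h l (Nat.lt_succ_iff.mp (Finset.mem_range.mp hl))]
  have hneg : ∀ (z : Fin k → ℤ), ((Multiset.map z Finset.univ.val).map fun r => X + C r).prod
      = (((Multiset.map z Finset.univ.val).map Neg.neg).map fun a => X - C a).prod := by
    intro z
    rw [Multiset.map_map, Multiset.map_map, Multiset.map_map]
    apply congrArg
    apply Multiset.map_congr rfl
    intro i _
    simp [Function.comp, sub_neg_eq_add]
  rw [hneg x, hneg y] at hprod
  have := congrArg Polynomial.roots hprod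
  rw [Polynomial.roots_multiset_prod_X_sub_C, Polynomial.roots_multiset_prod_X_sub_C] at this
  exact Multiset.map_injective neg_injective this

lemma esymm_zero_eq (k : ℕ) (x : Fin k → ℤ) : esymm k 0 x = 1 := by
  simp [esymm]

lemma esymm_abs_le (k l : ℕ) (x : Fin k → ℤ) (X : ℕ)
    (hx : ∀ i, 1 ≤ x i ∧ x i ≤ (X:ℤ)) :
    |esymm k l x| ≤ (k.choose l : ℤ) * (X:ℤ)^l := by
  have h1 : |esymm k l x| ≤ ∑ s ∈ Finset.powersetCard l (Finset.univ : Finset (Fin k)),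
      |∏ i ∈ s, x i| := Finset.abs_sum_le_sum_abs _ _
  have h2 : ∀ s ∈ Finset.powersetCard l (Finset.univ : Finset (Fin k)),
      |∏ i ∈ s, x i| ≤ (X:ℤ)^l := by
    intro s hs
    have hcard : s.card = l := (Finset.mem_powersetCard.mp hs).2
    rw [Finset.abs_prod, ← hcard, ← Finset.prod_const]
    apply Finset.prod_le_prod
    · intro i _; exact abs_nonneg _
    · intro i _
      rw [abs_le]
      exact ⟨le_trans (by linarith [(hx i).1, (hx i).2]) (hx i).1, (hx i).2⟩
  calc |esymm k l x| ≤ ∑ s ∈ Finset.powersetCard l (Finset.univ : Finset (Fin k)), |∏ i ∈ s, x i| := h1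
    _ ≤ ∑ _s ∈ Finset.powersetCard l (Finset.univ : Finset (Fin k)), (X:ℤ)^l :=
        Finset.sum_le_sum h2
    _ = (k.choose l : ℤ) * (X:ℤ)^l := by
        rw [Finset.sum_const, Finset.card_powersetCard, Finset.card_univ, Fintype.card_fin,
          nsmul_eq_mul]

end Poly

lemma pp_bound {δ : ℝ} (hδ : 0 < δ) (K : ℝ) (hK1 : 1 ≤ K) (hK2 : 1 ≤ K * (δ * Real.log 2))
    (P : ℕ) (hP : (2:ℝ) ^ (1/δ) ≤ P) (p e : ℕ) (hp : p.Prime) (he : 1 ≤ e) :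
    (e + 1 : ℝ) ≤ (if p ≤ P then K else 1) * ((p:ℝ) ^ e) ^ δ := by
  have hp2 : (2:ℝ) ≤ (p:ℝ) := by exact_mod_cast hp.two_le
  have hppos : (0:ℝ) ≤ (p:ℝ) := by positivity
  have hbase : ((p:ℝ) ^ e) ^ δ = ((p:ℝ) ^ δ) ^ (e:ℕ) := by
    rw [← Real.rpow_natCast (p:ℝ) e, ← Real.rpow_mul hppos, mul_comm,
      Real.rpow_mul hppos, Real.rpow_natCast]
  by_cases hcase : p ≤ P
  · simp only [if_pos hcase]
    have hlow : 1 + (e:ℝ) * δ * Real.log 2 ≤ ((p:ℝ) ^ e) ^ δ := by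
      have h1 : ((2:ℝ) ^ (e:ℕ) : ℝ) ^ δ ≤ ((p:ℝ) ^ e) ^ δ := by
        apply Real.rpow_le_rpow (by positivity) (pow_le_pow_left₀ (by norm_num) hp2 e) hδ.le
      have h2 : ((2:ℝ) ^ (e:ℕ) : ℝ) ^ δ = Real.exp ((e * δ) * Real.log 2) := by
        rw [← Real.rpow_natCast (2:ℝ) e, ← Real.rpow_mul (by norm_num),
          Real.rpow_def_of_pos (by norm_num)]
        ring_nf
      have h3 : 1 + (e:ℝ) * δ * Real.log 2 ≤ Real.exp ((e * δ) * Real.log 2) := by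
        have := Real.add_one_le_exp ((e * δ) * Real.log 2)
        nlinarith
      rw [← h2] at h3; linarith [h1, h3]
    have hlog : 0 < Real.log 2 := Real.log_pos (by norm_num)
    have : K * (1 + (e:ℝ) * δ * Real.log 2) ≥ (e:ℝ) + 1 := by
      have h1 : K * ((e:ℝ) * δ * Real.log 2) ≥ (e:ℝ) := by
        have : K * (δ * Real.log 2) * (e:ℝ) ≥ 1 * (e:ℝ) := by
          apply mul_le_mul_of_nonneg_right hK2 (by positivity)
        nlinarith
      nlinarith
    have hKnn : (0:ℝ) ≤ K := by linarith
    nlinarith [mul_le_mul_of_nonneg_left hlow hKnn]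
  · simp only [if_neg hcase]
    push_neg at hcase
    have hpP : ((2:ℝ) ^ (1/δ)) ≤ (p:ℝ) := le_trans hP (by exact_mod_cast hcase.le)
    have hpδ : (2:ℝ) ≤ (p:ℝ) ^ δ := by
      have := Real.rpow_le_rpow (by positivity) hpP hδ.le
      rwa [← Real.rpow_mul (by norm_num), one_div_mul_cancel hδ.ne', Real.rpow_one] at this
    have h2e : ((e:ℝ) + 1) ≤ (2:ℝ) ^ (e:ℕ) := by
      have := @Nat.lt_two_pow_self e
      exact_mod_cast Nat.succ_le_of_lt this
    have : (2:ℝ) ^ (e:ℕ) ≤ ((p:ℝ) ^ δ) ^ (e:ℕ) :=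
      pow_le_pow_left₀ (by norm_num) hpδ e
    rw [one_mul, hbase]; linarith

/-- Divisor bound: `d(n) ≪_δ n^δ`. -/
lemma divisor_bound {δ : ℝ} (hδ : 0 < δ) :
    ∃ C : ℝ, 1 ≤ C ∧ ∀ n : ℕ, n ≠ 0 → (n.divisors.card : ℝ) ≤ C * (n:ℝ) ^ δ := by
  have hlog : 0 < Real.log 2 := Real.log_pos (by norm_num)
  set K : ℝ := max 1 (1/(δ * Real.log 2)) with hKdef
  have hK1 : 1 ≤ K := le_max_left _ _
  have hK2 : 1 ≤ K * (δ * Real.log 2) := by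
    have h := le_max_right 1 (1/(δ * Real.log 2))
    have hd : 0 < δ * Real.log 2 := by positivity
    calc (1:ℝ) = (1/(δ * Real.log 2)) * (δ * Real.log 2) := by field_simp
    _ ≤ K * (δ * Real.log 2) := by apply mul_le_mul_of_nonneg_right h hd.le
  set P : ℕ := ⌈(2:ℝ) ^ (1/δ)⌉₊ with hPdef
  have hP : (2:ℝ) ^ (1/δ) ≤ P := Nat.le_ceil _
  refine ⟨K ^ (P + 1), one_le_pow₀ hK1, ?_⟩
  intro n hn
  have hKnn : (0:ℝ) ≤ K := by linarith
  have hcard : (n.divisors.card : ℝ) = ∏ p ∈ n.primeFactors, ((n.factorization p : ℝ) + 1) := by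
    rw [Nat.card_divisors hn]
    push_cast
    rfl
  have hval : (n:ℝ) ^ δ = ∏ p ∈ n.primeFactors, (((p:ℝ) ^ (n.factorization p)) ^ δ) := by
    have hn' : (n:ℝ) = ∏ p ∈ n.primeFactors, ((p:ℝ) ^ (n.factorization p)) := by
      conv_lhs => rw [← Nat.factorization_prod_pow_eq_self hn]
      rw [Nat.prod_factorization_eq_prod_primeFactors]
      push_cast
      rfl
    rw [hn', ← Real.finset_prod_rpow _ _ (fun p _ => by positivity)]
  rw [hcard, hval]
  calc ∏ p ∈ n.primeFactors, ((n.factorization p : ℝ) + 1)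
      ≤ ∏ p ∈ n.primeFactors,
        ((if p ≤ P then K else 1) * (((p:ℝ) ^ (n.factorization p)) ^ δ)) := by
        apply Finset.prod_le_prod
        · intro p hp; positivity
        · intro p hp
          exact pp_bound hδ K hK1 hK2 P hP p _ (Nat.prime_of_mem_primeFactors hp)
            ((Nat.Prime.factorization_pos_of_dvd (Nat.prime_of_mem_primeFactors hp) hn
              (Nat.dvd_of_mem_primeFactors hp)))
    _ = (∏ p ∈ n.primeFactors, (if p ≤ P then K else 1)) *
        ∏ p ∈ n.primeFactors, (((p:ℝ) ^ (n.factorization p)) ^ δ) := by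
        rw [Finset.prod_mul_distrib]
    _ ≤ K ^ (P + 1) * ∏ p ∈ n.primeFactors, (((p:ℝ) ^ (n.factorization p)) ^ δ) := by
        apply mul_le_mul_of_nonneg_right _ (by positivity)
        calc ∏ p ∈ n.primeFactors, (if p ≤ P then K else 1)
            = ∏ p ∈ n.primeFactors.filter (· ≤ P), K := by
              rw [Finset.prod_ite]; simp
          _ = K ^ (n.primeFactors.filter (· ≤ P)).card := by rw [Finset.prod_const]
          _ ≤ K ^ (P + 1) := by
              apply pow_le_pow_right₀ hK1
              have : (n.primeFactors.filter (· ≤ P)) ⊆ Finset.range (P + 1) := by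
                intro p hp
                simp only [Finset.mem_filter] at hp
                exact Finset.mem_range.mpr (Nat.lt_succ_of_le hp.2)
              calc (n.primeFactors.filter (· ≤ P)).card ≤ (Finset.range (P+1)).card :=
                    Finset.card_le_card this
                _ = P + 1 := Finset.card_range _


section Defs
variable (k r : ℕ) (kk : Fin r → ℕ) (a : Fin r → ℤ) (b : Fin r → ℕ → ℤ)

/-- read off the `m`-th entry (1-indexed) of an `h`-vector. -/
def hIdx (h : Fin k → ℤ) (m : ℕ) : ℤ :=
  if hm : 1 ≤ m ∧ m - 1 < k then h ⟨m-1, hm.2⟩ else 0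

/-- reconstruct the full vector of differences of symmetric functions from the
restricted one. -/
noncomputable def dFull (h : Fin k → ℤ) (m : ℕ) : ℤ :=
  if hj : ∃ j : Fin r, kk j = m then
    (∑ l ∈ (compSet k r kk).filter (fun l => l < m), b hj.choose l * hIdx k h l) / a hj.choose
  else hIdx k h m

/-- the product `∏ (x i - t)` (resp. `∏ (y i - t)`) as reconstructed from the data. -/
noncomputable def Nval (h : Fin k → ℤ) (flag : Bool) (t : ℤ) : ℤ :=
  (if flag then -1 else 1) * ∑ m ∈ Finset.Icc 1 k, dFull k r kk a b h m * (-t)^(k-m)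

/-- the restricted vector of differences of symmetric functions of a pair. -/
def hvec (x y : Fin k → ℤ) : Fin k → ℤ :=
  fun l => if ((l:ℕ)+1) ∈ compSet k r kk then esymm k ((l:ℕ)+1) x - esymm k ((l:ℕ)+1) y else 0

end Defs

/-- the key determinacy lemma: for solutions of the system, the full difference
vector is reconstructed from the restricted one. -/
lemma dFull_eq (k r : ℕ) (kk : Fin r → ℕ)
    (a : Fin r → ℤ) (ha : ∀ j, a j ≠ 0) (b : Fin r → ℕ → ℤ)
    (φ : Fin r → (Fin k → ℤ) → ℤ)
    (hφ : ∀ j z, φ j z =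
      a j * esymm k (kk j) z
        - ∑ l ∈ (compSet k r kk).filter (fun l => l < kk j), b j l * esymm k l z)
    (x y : Fin k → ℤ) (heq : ∀ j, φ j x = φ j y)
    (m : ℕ) (hm : m ∈ Finset.Icc 1 k) :
    dFull k r kk a b (hvec k r kk x y) m = esymm k m x - esymm k m y := by
  have hIdx_eq : ∀ l ∈ compSet k r kk, hIdx k (hvec k r kk x y) l
      = esymm k l x - esymm k l y := by
    intro l hl
    have hl' : l ∈ Finset.Icc 1 k := Finset.mem_sdiff.mp hl |>.1
    have h1 : 1 ≤ l := (Finset.mem_Icc.mp hl').1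
    have h2 : l - 1 < k := by
      have := (Finset.mem_Icc.mp hl').2; omega
    rw [hIdx, dif_pos ⟨h1, h2⟩, hvec]
    have hsucc : (l - 1) + 1 = l := by omega
    simp only [hsucc]
    rw [if_pos hl]
  by_cases hj : ∃ j : Fin r, kk j = m
  · rw [dFull, dif_pos hj]
    set j0 := hj.choose with hj0def
    have hj0 : kk j0 = m := hj.choose_spec
    have key : a j0 * (esymm k m x - esymm k m y) =
        ∑ l ∈ (compSet k r kk).filter (fun l => l < m), b j0 l *
          (esymm k l x - esymm k l y) := by
      have h1 := hφ j0 x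
      have h2 := hφ j0 y
      have h3 := heq j0
      rw [h1, h2, hj0] at h3
      rw [mul_sub]
      rw [Finset.sum_congr rfl (fun l _ => mul_sub (b j0 l) (esymm k l x) (esymm k l y))]
      rw [Finset.sum_sub_distrib]
      linarith [h3]
    have : ∑ l ∈ (compSet k r kk).filter (fun l => l < m),
        b j0 l * hIdx k (hvec k r kk x y) l = a j0 * (esymm k m x - esymm k m y) := by
      rw [key]
      apply Finset.sum_congr rfl
      intro l hl
      rw [hIdx_eq l (Finset.mem_filter.mp hl).1]
    rw [this, Int.mul_ediv_cancel_left _ (ha j0)]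
  · rw [dFull, dif_neg hj]
    apply hIdx_eq
    rw [compSet, Finset.mem_sdiff]
    refine ⟨hm, ?_⟩
    intro hmem
    obtain ⟨j, _, hjm⟩ := Finset.mem_image.mp hmem
    exact hj ⟨j, hjm⟩

/-! sorted list representation -/

def sortList (k : ℕ) (z : Fin k → ℤ) : List ℤ :=
  Multiset.sort (Multiset.map z Finset.univ.val) (· ≤ ·)

lemma sortList_length (k : ℕ) (z : Fin k → ℤ) : (sortList k z).length = k := by
  rw [sortList, Multiset.length_sort]; simp

lemma mem_sortList (k : ℕ) (z : Fin k → ℤ) (i : Fin k) : z i ∈ sortList k z := by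
  rw [sortList, Multiset.mem_sort]
  simp only [Multiset.mem_map]
  exact ⟨i, by simp, rfl⟩

def rhoFun (k : ℕ) (z : Fin k → ℤ) (i : Fin k) : Fin k :=
  ⟨(sortList k z).idxOf (z i), by
    have h := List.idxOf_lt_length_iff.mpr (mem_sortList k z i)
    rwa [sortList_length k z] at h⟩

lemma sortList_get_rho (k : ℕ) (z : Fin k → ℤ) (i : Fin k)
    (hlt : ((rhoFun k z i : ℕ)) < (sortList k z).length) :
    (sortList k z)[(rhoFun k z i : ℕ)] = z i := List.getElem_idxOf hlt

/-! the encoding map -/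

noncomputable def enc (k r : ℕ) (kk : Fin r → ℕ) (p : (Fin k → ℤ) × (Fin k → ℤ)) :
    (Fin k → ℤ) × Bool × ℤ × (Fin k → ℤ) × (Fin k → Fin k) :=
  if hc : ∃ j, p.2 j ∉ Set.range p.1 then
    (hvec k r kk p.1 p.2, false, p.2 hc.choose, fun i => p.1 i - p.2 hc.choose, rhoFun k p.2)
  else if hc2 : ∃ j, p.1 j ∉ Set.range p.2 then
    (hvec k r kk p.1 p.2, true, p.1 hc2.choose, fun i => p.2 i - p.1 hc2.choose, rhoFun k p.1)
  else (hvec k r kk p.1 p.2, true, 0, 0, rhoFun k p.1)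

lemma tuple_eq_of_esymm (k : ℕ) (y y' : Fin k → ℤ)
    (hsym : ∀ m, m ≤ k → esymm k m y = esymm k m y')
    (hρ : rhoFun k y = rhoFun k y') : y = y' := by
  have hms := multiset_eq_of_esymm_eq k y y' hsym
  have hL : sortList k y = sortList k y' := by rw [sortList, sortList, hms]
  funext i
  have hlt : ((rhoFun k y i : ℕ)) < (sortList k y).length := by
    rw [sortList_length]; exact (rhoFun k y i).2
  have hlt' : ((rhoFun k y' i : ℕ)) < (sortList k y').length := by
    rw [sortList_length]; exact (rhoFun k y' i).2
  have hidx : (rhoFun k y i : ℕ) = (rhoFun k y' i : ℕ) := by rw [hρ]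
  calc y i = (sortList k y)[(rhoFun k y i : ℕ)] := (sortList_get_rho k y i hlt).symm
    _ = (sortList k y')[(rhoFun k y' i : ℕ)] := by simp only [hL, hidx]
    _ = y' i := sortList_get_rho k y' i hlt'

lemma enc_inj (k r : ℕ) (kk : Fin r → ℕ)
    (a : Fin r → ℤ) (ha : ∀ j, a j ≠ 0) (b : Fin r → ℕ → ℤ)
    (φ : Fin r → (Fin k → ℤ) → ℤ)
    (hφ : ∀ j z, φ j z =
      a j * esymm k (kk j) z
        - ∑ l ∈ (compSet k r kk).filter (fun l => l < kk j), b j l * esymm k l z)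
    (p p' : (Fin k → ℤ) × (Fin k → ℤ))
    (hp : (∀ j, φ j p.1 = φ j p.2) ∧ ∃ j, p.2 j ∉ Set.range p.1 ∨ p.1 j ∉ Set.range p.2)
    (hp' : (∀ j, φ j p'.1 = φ j p'.2) ∧ ∃ j, p'.2 j ∉ Set.range p'.1 ∨ p'.1 j ∉ Set.range p'.2)
    (henc : enc k r kk p = enc k r kk p') : p = p' := by
  by_cases hc : ∃ j, p.2 j ∉ Set.range p.1 <;>
    by_cases hc' : ∃ j, p'.2 j ∉ Set.range p'.1
  · -- both flag false
    rw [enc, enc, dif_pos hc, dif_pos hc'] at henc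
    simp only [Prod.mk.injEq] at henc
    obtain ⟨h_h, -, h_t, h_d, h_ρ⟩ := henc
    have hx : p.1 = p'.1 := by
      funext i
      have := congrFun h_d i
      omega
    have hδ : ∀ m ∈ Finset.Icc 1 k, esymm k m p.1 - esymm k m p.2
        = esymm k m p'.1 - esymm k m p'.2 := by
      intro m hm
      have hd1 := dFull_eq k r kk a ha b φ hφ p.1 p.2 hp.1 m hm
      have hd2 := dFull_eq k r kk a ha b φ hφ p'.1 p'.2 hp'.1 m hm
      rw [h_h] at hd1
      rw [← hd1, hd2]
    have hsym : ∀ m, m ≤ k → esymm k m p.2 = esymm k m p'.2 := by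
      intro m hmk
      rcases Nat.eq_zero_or_pos m with h0 | h1
      · rw [h0, esymm_zero_eq, esymm_zero_eq]
      · have := hδ m (Finset.mem_Icc.mpr ⟨h1, hmk⟩)
        rw [hx] at this
        omega
    have hy : p.2 = p'.2 := tuple_eq_of_esymm k p.2 p'.2 hsym h_ρ
    exact Prod.ext hx hy
  · -- flag mismatch
    exfalso
    have hf : (enc k r kk p).2.1 = false := by rw [enc, dif_pos hc]
    have hf' : (enc k r kk p').2.1 = true := by
      rw [enc, dif_neg hc']
      by_cases hc2' : ∃ j, p'.1 j ∉ Set.range p'.2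
      · rw [dif_pos hc2']
      · rw [dif_neg hc2']
    rw [henc, hf'] at hf
    simp at hf
  · -- flag mismatch
    exfalso
    have hf : (enc k r kk p').2.1 = false := by rw [enc, dif_pos hc']
    have hf' : (enc k r kk p).2.1 = true := by
      rw [enc, dif_neg hc]
      by_cases hc2 : ∃ j, p.1 j ∉ Set.range p.2
      · rw [dif_pos hc2]
      · rw [dif_neg hc2]
    rw [← henc, hf'] at hf
    simp at hf
  · -- both flag true
    have hc2 : ∃ j, p.1 j ∉ Set.range p.2 := by
      obtain ⟨j, hj | hj⟩ := hp.2
      · exact absurd ⟨j, hj⟩ hc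
      · exact ⟨j, hj⟩
    have hc2' : ∃ j, p'.1 j ∉ Set.range p'.2 := by
      obtain ⟨j, hj | hj⟩ := hp'.2
      · exact absurd ⟨j, hj⟩ hc'
      · exact ⟨j, hj⟩
    rw [enc, enc, dif_neg hc, dif_neg hc', dif_pos hc2, dif_pos hc2'] at henc
    simp only [Prod.mk.injEq] at henc
    obtain ⟨h_h, -, h_t, h_d, h_ρ⟩ := henc
    have hy : p.2 = p'.2 := by
      funext i
      have := congrFun h_d i
      omega
    have hδ : ∀ m ∈ Finset.Icc 1 k, esymm k m p.1 - esymm k m p.2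
        = esymm k m p'.1 - esymm k m p'.2 := by
      intro m hm
      have hd1 := dFull_eq k r kk a ha b φ hφ p.1 p.2 hp.1 m hm
      have hd2 := dFull_eq k r kk a ha b φ hφ p'.1 p'.2 hp'.1 m hm
      rw [h_h] at hd1
      rw [← hd1, hd2]
    have hsym : ∀ m, m ≤ k → esymm k m p.1 = esymm k m p'.1 := by
      intro m hmk
      rcases Nat.eq_zero_or_pos m with h0 | h1
      · rw [h0, esymm_zero_eq, esymm_zero_eq]
      · have := hδ m (Finset.mem_Icc.mpr ⟨h1, hmk⟩)
        rw [hy] at this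
        omega
    have hx : p.1 = p'.1 := tuple_eq_of_esymm k p.1 p'.1 hsym h_ρ
    exact Prod.ext hx hy

lemma Nval_true (k r : ℕ) (kk : Fin r → ℕ) (a : Fin r → ℤ) (b : Fin r → ℕ → ℤ)
    (h : Fin k → ℤ) (t : ℤ) :
    Nval k r kk a b h true t = - Nval k r kk a b h false t := by
  rw [Nval, Nval]; simp

lemma Nval_eq_prod (k r : ℕ) (kk : Fin r → ℕ)
    (a : Fin r → ℤ) (ha : ∀ j, a j ≠ 0) (b : Fin r → ℕ → ℤ)
    (φ : Fin r → (Fin k → ℤ) → ℤ)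
    (hφ : ∀ j z, φ j z =
      a j * esymm k (kk j) z
        - ∑ l ∈ (compSet k r kk).filter (fun l => l < kk j), b j l * esymm k l z)
    (x y : Fin k → ℤ) (heq : ∀ j, φ j x = φ j y) (t : ℤ) :
    Nval k r kk a b (hvec k r kk x y) false t = ∏ i, (x i - t) - ∏ i, (y i - t) := by
  rw [Nval]
  simp only [Bool.false_eq_true, if_false, one_mul]
  rw [Finset.sum_congr rfl (fun m hm => by
    rw [dFull_eq k r kk a ha b φ hφ x y heq m hm])]
  have ex : ∏ i, (x i - t) = ∑ l ∈ Finset.range (k+1), esymm k l x * (-t)^(k-l) := by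
    rw [← vieta k x (-t)]; exact Finset.prod_congr rfl fun i _ => by ring
  have ey : ∏ i, (y i - t) = ∑ l ∈ Finset.range (k+1), esymm k l y * (-t)^(k-l) := by
    rw [← vieta k y (-t)]; exact Finset.prod_congr rfl fun i _ => by ring
  rw [ex, ey, ← Finset.sum_sub_distrib]
  have hins : Finset.range (k+1) = insert 0 (Finset.Icc 1 k) := by
    ext n; simp only [Finset.mem_range, Finset.mem_insert, Finset.mem_Icc]; omega
  rw [hins, Finset.sum_insert (by simp)]
  rw [esymm_zero_eq, esymm_zero_eq]
  simp only [one_mul, sub_self, zero_add]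
  exact Finset.sum_congr rfl fun m _ => by ring

def intDivisors (N : ℤ) : Finset ℤ :=
  N.natAbs.divisors.image (fun m : ℕ => (m:ℤ)) ∪ N.natAbs.divisors.image (fun m : ℕ => -(m:ℤ))

lemma mem_intDivisors (N z : ℤ) (hN : N ≠ 0) (hz : z ∣ N) : z ∈ intDivisors N := by
  have h1 : z.natAbs ∈ N.natAbs.divisors :=
    Nat.mem_divisors.mpr ⟨Int.natAbs_dvd_natAbs.mpr hz, Int.natAbs_ne_zero.mpr hN⟩
  rcases Int.natAbs_eq z with h | h
  · exact Finset.mem_union_left _ (Finset.mem_image.mpr ⟨_, h1, h.symm⟩)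
  · exact Finset.mem_union_right _ (Finset.mem_image.mpr ⟨_, h1, h.symm⟩)

lemma card_intDivisors (N : ℤ) : (intDivisors N).card ≤ 2 * N.natAbs.divisors.card := by
  calc (intDivisors N).card ≤ (N.natAbs.divisors.image (fun m : ℕ => (m:ℤ))).card
      + (N.natAbs.divisors.image (fun m : ℕ => -(m:ℤ))).card := Finset.card_union_le _ _
    _ ≤ N.natAbs.divisors.card + N.natAbs.divisors.card :=
        Nat.add_le_add (Finset.card_image_le) (Finset.card_image_le)
    _ = 2 * N.natAbs.divisors.card := by ring

noncomputable def HF (k r : ℕ) (kk : Fin r → ℕ) (X : ℕ) : Finset (Fin k → ℤ) :=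
  Fintype.piFinset (fun l : Fin k => if ((l:ℕ)+1) ∈ compSet k r kk then
    Finset.Icc (-(2*(k.choose ((l:ℕ)+1)) * (X:ℤ)^((l:ℕ)+1)))
      (2*(k.choose ((l:ℕ)+1)) * (X:ℤ)^((l:ℕ)+1)) else {0})

lemma hvec_mem_HF (k r : ℕ) (kk : Fin r → ℕ) (X : ℕ) (x y : Fin k → ℤ)
    (hbx : ∀ i, 1 ≤ x i ∧ x i ≤ (X:ℤ)) (hby : ∀ i, 1 ≤ y i ∧ y i ≤ (X:ℤ)) :
    hvec k r kk x y ∈ HF k r kk X := by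
  classical
  rw [HF, Fintype.mem_piFinset]
  intro l
  rw [hvec]
  by_cases h : ((l:ℕ)+1) ∈ compSet k r kk
  · rw [if_pos h, if_pos h, Finset.mem_Icc, ← abs_le]
    have h1 := esymm_abs_le k ((l:ℕ)+1) x X hbx
    have h2 := esymm_abs_le k ((l:ℕ)+1) y X hby
    calc |esymm k ((l:ℕ)+1) x - esymm k ((l:ℕ)+1) y|
        ≤ |esymm k ((l:ℕ)+1) x| + |esymm k ((l:ℕ)+1) y| := by
          rw [sub_eq_add_neg]
          exact (abs_add_le _ _).trans (by rw [abs_neg])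
      _ ≤ 2*(k.choose ((l:ℕ)+1)) * (X:ℤ)^((l:ℕ)+1) := by push_cast; linarith
  · rw [if_neg h, if_neg h]
    exact Finset.mem_singleton_self 0

open Classical in
noncomputable def TF (k r : ℕ) (kk : Fin r → ℕ) (a : Fin r → ℤ) (b : Fin r → ℕ → ℤ)
    (X : ℕ) : Finset ((Fin k → ℤ) × Bool × ℤ × (Fin k → ℤ) × (Fin k → Fin k)) :=
  (HF k r kk X ×ˢ (Finset.univ : Finset Bool) ×ˢ Finset.Icc (1:ℤ) (X:ℤ)).biUnion
    (fun q => {q.1} ×ˢ {q.2.1} ×ˢ {q.2.2} ×ˢ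
      Fintype.piFinset (fun _ : Fin k => intDivisors (Nval k r kk a b q.1 q.2.1 q.2.2)) ×ˢ
      (Finset.univ : Finset (Fin k → Fin k)))

lemma enc_mem (k r : ℕ) (kk : Fin r → ℕ)
    (a : Fin r → ℤ) (ha : ∀ j, a j ≠ 0) (b : Fin r → ℕ → ℤ)
    (φ : Fin r → (Fin k → ℤ) → ℤ)
    (hφ : ∀ j z, φ j z =
      a j * esymm k (kk j) z
        - ∑ l ∈ (compSet k r kk).filter (fun l => l < kk j), b j l * esymm k l z)
    (X : ℕ) (p : (Fin k → ℤ) × (Fin k → ℤ))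
    (hbx : ∀ i, 1 ≤ p.1 i ∧ p.1 i ≤ (X:ℤ)) (hby : ∀ i, 1 ≤ p.2 i ∧ p.2 i ≤ (X:ℤ))
    (hsol : (∀ j, φ j p.1 = φ j p.2) ∧
      ∃ j, p.2 j ∉ Set.range p.1 ∨ p.1 j ∉ Set.range p.2) :
    enc k r kk p ∈ TF k r kk a b X := by
  classical
  by_cases hc : ∃ j, p.2 j ∉ Set.range p.1
  · rw [enc, dif_pos hc]
    set t := p.2 hc.choose with htdef
    rw [TF]
    apply Finset.mem_biUnion.mpr
    refine ⟨(hvec k r kk p.1 p.2, false, t), ?_, ?_⟩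
    · rw [Finset.mem_product, Finset.mem_product]
      exact ⟨hvec_mem_HF k r kk X p.1 p.2 hbx hby, Finset.mem_univ _,
        Finset.mem_Icc.mpr ⟨(hby _).1, (hby _).2⟩⟩
    · simp only [Finset.mem_product, Finset.mem_singleton, Fintype.mem_piFinset]
      refine ⟨trivial, trivial, trivial, ?_, Finset.mem_univ _⟩
      intro i
      have hNeq : Nval k r kk a b (hvec k r kk p.1 p.2) false t = ∏ i, (p.1 i - t) := by
        rw [Nval_eq_prod k r kk a ha b φ hφ p.1 p.2 hsol.1 t]
        have : ∏ i, (p.2 i - t) = 0 :=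
          Finset.prod_eq_zero (Finset.mem_univ hc.choose) (by rw [htdef, sub_self])
        rw [this, sub_zero]
      have hN0 : Nval k r kk a b (hvec k r kk p.1 p.2) false t ≠ 0 := by
        rw [hNeq]
        apply Finset.prod_ne_zero_iff.mpr
        intro i _
        intro hzero
        exact hc.choose_spec ⟨i, by omega⟩
      apply mem_intDivisors _ _ hN0
      rw [hNeq]
      exact Finset.dvd_prod_of_mem _ (Finset.mem_univ i)
  · have hc2 : ∃ j, p.1 j ∉ Set.range p.2 := by
      obtain ⟨j, hj | hj⟩ := hsol.2
      · exact absurd ⟨j, hj⟩ hc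
      · exact ⟨j, hj⟩
    rw [enc, dif_neg hc, dif_pos hc2]
    set t := p.1 hc2.choose with htdef
    rw [TF]
    apply Finset.mem_biUnion.mpr
    refine ⟨(hvec k r kk p.1 p.2, true, t), ?_, ?_⟩
    · rw [Finset.mem_product, Finset.mem_product]
      exact ⟨hvec_mem_HF k r kk X p.1 p.2 hbx hby, Finset.mem_univ _,
        Finset.mem_Icc.mpr ⟨(hbx _).1, (hbx _).2⟩⟩
    · simp only [Finset.mem_product, Finset.mem_singleton, Fintype.mem_piFinset]
      refine ⟨trivial, trivial, trivial, ?_, Finset.mem_univ _⟩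
      intro i
      have hNeq : Nval k r kk a b (hvec k r kk p.1 p.2) true t = ∏ i, (p.2 i - t) := by
        rw [Nval_true, Nval_eq_prod k r kk a ha b φ hφ p.1 p.2 hsol.1 t]
        have : ∏ i, (p.1 i - t) = 0 :=
          Finset.prod_eq_zero (Finset.mem_univ hc2.choose) (by rw [htdef, sub_self])
        rw [this, zero_sub, neg_neg]
      have hN0 : Nval k r kk a b (hvec k r kk p.1 p.2) true t ≠ 0 := by
        rw [hNeq]
        apply Finset.prod_ne_zero_iff.mpr
        intro i _
        intro hzero
        exact hc2.choose_spec ⟨i, by omega⟩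
      apply mem_intDivisors _ _ hN0
      rw [hNeq]
      exact Finset.dvd_prod_of_mem _ (Finset.mem_univ i)

lemma choose_le_two_pow (k m : ℕ) : k.choose m ≤ 2 ^ k := by
  rcases le_or_gt m k with h | h
  · calc k.choose m ≤ ∑ i ∈ Finset.range (k+1), k.choose i :=
        Finset.single_le_sum (fun i _ => Nat.zero_le _)
          (Finset.mem_range.mpr (Nat.lt_succ_of_le h))
      _ = 2 ^ k := Nat.sum_range_choose k
  · rw [Nat.choose_eq_zero_of_lt h]; exact Nat.zero_le _

/-- the reindexing between `compSet` and indices in `Fin k`. -/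
lemma compSet_image (k r : ℕ) (kk : Fin r → ℕ) :
    (Finset.univ.filter (fun l : Fin k => ((l:ℕ)+1) ∈ compSet k r kk)).image
      (fun l : Fin k => (l:ℕ)+1) = compSet k r kk := by
  ext m
  simp only [Finset.mem_image, Finset.mem_filter, Finset.mem_univ, true_and]
  constructor
  · rintro ⟨l, hl, rfl⟩; exact hl
  · intro hm
    have hm' : m ∈ Finset.Icc 1 k := (Finset.mem_sdiff.mp hm).1
    have h1 : 1 ≤ m := (Finset.mem_Icc.mp hm').1
    have h2 : m ≤ k := (Finset.mem_Icc.mp hm').2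
    refine ⟨⟨m - 1, by omega⟩, ?_, by simp; omega⟩
    have : (m - 1) + 1 = m := by omega
    simpa [this] using hm

lemma sum_compSet_eq (k r : ℕ) (kk : Fin r → ℕ) (f : ℕ → ℕ) :
    ∑ m ∈ compSet k r kk, f m =
      ∑ l ∈ Finset.univ.filter (fun l : Fin k => ((l:ℕ)+1) ∈ compSet k r kk), f ((l:ℕ)+1) := by
  have hinj : ∀ l ∈ Finset.univ.filter (fun l : Fin k => ((l:ℕ)+1) ∈ compSet k r kk),
      ∀ l' ∈ Finset.univ.filter (fun l : Fin k => ((l:ℕ)+1) ∈ compSet k r kk),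
      (l:ℕ)+1 = (l':ℕ)+1 → l = l' := by
    intro l _ l' _ h
    exact Fin.ext (by omega)
  calc ∑ m ∈ compSet k r kk, f m
      = ∑ m ∈ (Finset.univ.filter (fun l : Fin k => ((l:ℕ)+1) ∈ compSet k r kk)).image
          (fun l : Fin k => (l:ℕ)+1), f m := by rw [compSet_image]
    _ = _ := Finset.sum_image hinj

lemma prod_compSet_eq (k r : ℕ) (kk : Fin r → ℕ) (f : ℕ → ℕ) :
    ∏ m ∈ compSet k r kk, f m =
      ∏ l ∈ Finset.univ.filter (fun l : Fin k => ((l:ℕ)+1) ∈ compSet k r kk), f ((l:ℕ)+1) := by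
  have hinj : ∀ l ∈ Finset.univ.filter (fun l : Fin k => ((l:ℕ)+1) ∈ compSet k r kk),
      ∀ l' ∈ Finset.univ.filter (fun l : Fin k => ((l:ℕ)+1) ∈ compSet k r kk),
      (l:ℕ)+1 = (l':ℕ)+1 → l = l' := by
    intro l _ l' _ h
    exact Fin.ext (by omega)
  calc ∏ m ∈ compSet k r kk, f m
      = ∏ m ∈ (Finset.univ.filter (fun l : Fin k => ((l:ℕ)+1) ∈ compSet k r kk)).image
          (fun l : Fin k => (l:ℕ)+1), f m := by rw [compSet_image]
    _ = _ := Finset.prod_image hinj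

lemma HF_card_le (k r : ℕ) (kk : Fin r → ℕ) (X : ℕ) (hX : 1 ≤ X) :
    (HF k r kk X).card ≤ (∏ m ∈ compSet k r kk, (5 * k.choose m)) *
      X ^ (∑ m ∈ compSet k r kk, m) := by
  classical
  rw [HF, Fintype.card_piFinset]
  have hcard : ∀ l : Fin k,
      (if ((l:ℕ)+1) ∈ compSet k r kk then
        Finset.Icc (-(2*(k.choose ((l:ℕ)+1)) * (X:ℤ)^((l:ℕ)+1)))
          (2*(k.choose ((l:ℕ)+1)) * (X:ℤ)^((l:ℕ)+1)) else {0}).card ≤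
      (if ((l:ℕ)+1) ∈ compSet k r kk then (5 * k.choose ((l:ℕ)+1)) * X ^ ((l:ℕ)+1) else 1) := by
    intro l
    by_cases h : ((l:ℕ)+1) ∈ compSet k r kk
    · rw [if_pos h, if_pos h, Int.card_Icc]
      have hc1 : 1 ≤ k.choose ((l:ℕ)+1) := Nat.choose_pos (by omega)
      have hx1 : 1 ≤ X ^ ((l:ℕ)+1) := Nat.one_le_pow _ _ (by omega)
      have : (2*(k.choose ((l:ℕ)+1)) * (X:ℤ)^((l:ℕ)+1) + 1 -
          (-(2*(k.choose ((l:ℕ)+1)) * (X:ℤ)^((l:ℕ)+1)))) =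
          ((4 * k.choose ((l:ℕ)+1) * X ^ ((l:ℕ)+1) + 1 : ℕ) : ℤ) := by
        push_cast; ring
      rw [this, Int.toNat_natCast]
      nlinarith
    · rw [if_neg h, if_neg h]
      simp
  calc ∏ l : Fin k, (if ((l:ℕ)+1) ∈ compSet k r kk then
        Finset.Icc (-(2*(k.choose ((l:ℕ)+1)) * (X:ℤ)^((l:ℕ)+1)))
          (2*(k.choose ((l:ℕ)+1)) * (X:ℤ)^((l:ℕ)+1)) else {0}).card
      ≤ ∏ l : Fin k, (if ((l:ℕ)+1) ∈ compSet k r kk then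
          (5 * k.choose ((l:ℕ)+1)) * X ^ ((l:ℕ)+1) else 1) :=
        Finset.prod_le_prod' (fun l _ => hcard l)
    _ = (∏ l : Fin k, if ((l:ℕ)+1) ∈ compSet k r kk then 5 * k.choose ((l:ℕ)+1) else 1) *
        (∏ l : Fin k, if ((l:ℕ)+1) ∈ compSet k r kk then X ^ ((l:ℕ)+1) else 1) := by
        rw [← Finset.prod_mul_distrib]
        exact Finset.prod_congr rfl fun l _ => by split <;> simp
    _ = (∏ m ∈ compSet k r kk, (5 * k.choose m)) * X ^ (∑ m ∈ compSet k r kk, m) := by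
        have h1 : (∏ l : Fin k, if ((l:ℕ)+1) ∈ compSet k r kk then 5 * k.choose ((l:ℕ)+1) else 1)
            = ∏ m ∈ compSet k r kk, (5 * k.choose m) := by
          rw [prod_compSet_eq k r kk (fun m => 5 * k.choose m), Finset.prod_ite,
            Finset.prod_const_one, mul_one]
        have h2 : (∏ l : Fin k, if ((l:ℕ)+1) ∈ compSet k r kk then X ^ ((l:ℕ)+1) else 1)
            = X ^ (∑ m ∈ compSet k r kk, m) := by
          rw [show (∏ l : Fin k, if ((l:ℕ)+1) ∈ compSet k r kk then X ^ ((l:ℕ)+1) else 1)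
            = ∏ l : Fin k, X ^ (if ((l:ℕ)+1) ∈ compSet k r kk then ((l:ℕ)+1) else 0) from
            Finset.prod_congr rfl fun l _ => by split <;> simp]
          rw [Finset.prod_pow_eq_pow_sum]
          congr 1
          rw [sum_compSet_eq k r kk (fun m => m), Finset.sum_ite, Finset.sum_const_zero, add_zero]
        rw [h1, h2]

lemma hIdx_abs_le (k r : ℕ) (kk : Fin r → ℕ) (X : ℕ) (hX : 1 ≤ X) (h : Fin k → ℤ)
    (hh : h ∈ HF k r kk X) (m : ℕ) : |hIdx k h m| ≤ 2 * 2^k * (X:ℤ)^k := by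
  have hXk : (1:ℤ) ≤ (X:ℤ)^k := one_le_pow₀ (by exact_mod_cast hX)
  have hB : (0:ℤ) ≤ 2 * 2^k * (X:ℤ)^k := by positivity
  rw [hIdx]
  split
  · next hm =>
    have hmem := Fintype.mem_piFinset.mp hh ⟨m-1, hm.2⟩
    by_cases hcs : ((m-1)+1) ∈ compSet k r kk
    · rw [if_pos hcs, Finset.mem_Icc, ← abs_le] at hmem
      calc |h ⟨m-1, hm.2⟩| ≤ 2*(k.choose ((m-1)+1)) * (X:ℤ)^((m-1)+1) := hmem
        _ ≤ 2 * 2^k * (X:ℤ)^k := by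
            have h1 : (k.choose ((m-1)+1) : ℤ) ≤ 2^k := by
              exact_mod_cast choose_le_two_pow k ((m-1)+1)
            have h2 : (X:ℤ)^((m-1)+1) ≤ (X:ℤ)^k := by
              apply pow_le_pow_right₀ (by exact_mod_cast hX)
              omega
            have h3 : (0:ℤ) ≤ (X:ℤ)^((m-1)+1) := by positivity
            have h4 : (0:ℤ) ≤ (k.choose ((m-1)+1) : ℤ) := by positivity
            nlinarith
    · rw [if_neg hcs, Finset.mem_singleton] at hmem
      rw [hmem]; simpa using hB
  · simpa using hB

lemma dFull_abs_le (k r : ℕ) (kk : Fin r → ℕ) (a : Fin r → ℤ) (b : Fin r → ℕ → ℤ)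
    (X : ℕ) (hX : 1 ≤ X) (h : Fin k → ℤ) (hh : h ∈ HF k r kk X) (m : ℕ) :
    |dFull k r kk a b h m| ≤
      (1 + ∑ j : Fin r, ∑ l ∈ Finset.Icc 1 k, (b j l).natAbs : ℕ) * (2 * 2^k * (X:ℤ)^k) := by
  set B0 : ℤ := 2 * 2^k * (X:ℤ)^k with hB0
  have hB0nn : (0:ℤ) ≤ B0 := by positivity
  set Cbig : ℕ := ∑ j : Fin r, ∑ l ∈ Finset.Icc 1 k, (b j l).natAbs with hCbig
  have hIb : ∀ m', |hIdx k h m'| ≤ B0 := fun m' => hIdx_abs_le k r kk X hX h hh m'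
  rw [dFull]
  split
  · next hj =>
    set j0 := hj.choose
    calc |(∑ l ∈ (compSet k r kk).filter (fun l => l < m), b j0 l * hIdx k h l) / a j0|
        ≤ |∑ l ∈ (compSet k r kk).filter (fun l => l < m), b j0 l * hIdx k h l| :=
          Int.abs_ediv_le_abs _ _
      _ ≤ ∑ l ∈ (compSet k r kk).filter (fun l => l < m), |b j0 l * hIdx k h l| :=
          Finset.abs_sum_le_sum_abs _ _
      _ ≤ ∑ l ∈ (compSet k r kk).filter (fun l => l < m), |b j0 l| * B0 := by
          apply Finset.sum_le_sum
          intro l _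
          rw [abs_mul]
          exact mul_le_mul_of_nonneg_left (hIb l) (abs_nonneg _)
      _ ≤ ∑ l ∈ Finset.Icc 1 k, |b j0 l| * B0 := by
          apply Finset.sum_le_sum_of_subset_of_nonneg
          · intro l hl
            exact (Finset.mem_sdiff.mp (Finset.mem_filter.mp hl).1).1
          · intro l _ _
            positivity
      _ = (∑ l ∈ Finset.Icc 1 k, |b j0 l|) * B0 := by rw [Finset.sum_mul]
      _ ≤ ((1 + Cbig : ℕ) : ℤ) * B0 := by
          apply mul_le_mul_of_nonneg_right _ hB0nn
          have h1 : (∑ l ∈ Finset.Icc 1 k, |b j0 l|) =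
              ((∑ l ∈ Finset.Icc 1 k, (b j0 l).natAbs : ℕ) : ℤ) := by
            push_cast [Int.natCast_natAbs]
            rfl
          rw [h1]
          have h2 : (∑ l ∈ Finset.Icc 1 k, (b j0 l).natAbs) ≤ Cbig :=
            Finset.single_le_sum (f := fun j => ∑ l ∈ Finset.Icc 1 k, (b j l).natAbs)
              (fun j _ => Nat.zero_le _) (Finset.mem_univ j0)
          have h3 : (∑ l ∈ Finset.Icc 1 k, (b j0 l).natAbs) ≤ 1 + Cbig := by omega
          exact_mod_cast h3
  · next hj =>
    calc |hIdx k h m| ≤ B0 := hIb m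
      _ ≤ ((1 + Cbig : ℕ) : ℤ) * B0 := by
          apply le_mul_of_one_le_left hB0nn
          exact_mod_cast Nat.le_add_right 1 Cbig

lemma Nval_natAbs_le (k r : ℕ) (kk : Fin r → ℕ) (a : Fin r → ℤ) (b : Fin r → ℕ → ℤ)
    (X : ℕ) (hX : 1 ≤ X) (h : Fin k → ℤ) (hh : h ∈ HF k r kk X) (flag : Bool) (t : ℤ)
    (ht : t ∈ Finset.Icc (1:ℤ) (X:ℤ)) :
    (Nval k r kk a b h flag t).natAbs ≤
      (2 * k * (1 + ∑ j : Fin r, ∑ l ∈ Finset.Icc 1 k, (b j l).natAbs) * 2^k) * X^(2*k) := by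
  set Cb : ℕ := 1 + ∑ j : Fin r, ∑ l ∈ Finset.Icc 1 k, (b j l).natAbs with hCb
  have hXZ : (1:ℤ) ≤ (X:ℤ) := by exact_mod_cast hX
  have habs : |Nval k r kk a b h flag t| ≤
      ((2 * k * Cb * 2^k) * X^(2*k) : ℕ) := by
    rw [Nval, abs_mul]
    have hsign : |(if flag then (-1:ℤ) else 1)| = 1 := by
      split <;> simp
    rw [hsign, one_mul]
    have ht' := Finset.mem_Icc.mp ht
    calc |∑ m ∈ Finset.Icc 1 k, dFull k r kk a b h m * (-t)^(k-m)|
        ≤ ∑ m ∈ Finset.Icc 1 k, |dFull k r kk a b h m * (-t)^(k-m)| :=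
          Finset.abs_sum_le_sum_abs _ _
      _ ≤ ∑ m ∈ Finset.Icc 1 k, ((Cb:ℤ) * (2 * 2^k * (X:ℤ)^k)) * (X:ℤ)^(k-1) := by
          apply Finset.sum_le_sum
          intro m hm
          rw [abs_mul]
          have h1 := dFull_abs_le k r kk a b X hX h hh m
          have h2 : |(-t)^(k-m)| ≤ (X:ℤ)^(k-1) := by
            rw [abs_pow, abs_neg]
            calc |t|^(k-m) ≤ (X:ℤ)^(k-m) := by
                  apply pow_le_pow_left₀ (abs_nonneg t)
                  rw [abs_le]; constructor <;> linarith [ht'.1, ht'.2]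
              _ ≤ (X:ℤ)^(k-1) := by
                  apply pow_le_pow_right₀ hXZ
                  have := (Finset.mem_Icc.mp hm).1
                  omega
          have hnn1 : (0:ℤ) ≤ |dFull k r kk a b h m| := abs_nonneg _
          have hnn2 : (0:ℤ) ≤ |(-t)^(k-m)| := abs_nonneg _
          have hnn3 : (0:ℤ) ≤ (Cb:ℤ) * (2 * 2^k * (X:ℤ)^k) := by positivity
          exact mul_le_mul h1 h2 hnn2 hnn3
      _ = (k:ℤ) * ((Cb:ℤ) * (2 * 2^k * (X:ℤ)^k) * (X:ℤ)^(k-1)) := by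
          rw [Finset.sum_const, Nat.card_Icc]
          simp [nsmul_eq_mul]
      _ ≤ ((2 * k * Cb * 2^k) * X^(2*k) : ℕ) := by
          have hpow : (X:ℤ)^k * (X:ℤ)^(k-1) ≤ (X:ℤ)^(2*k) := by
            rw [← pow_add]
            apply pow_le_pow_right₀ hXZ
            omega
          calc (k:ℤ) * ((Cb:ℤ) * (2 * 2^k * (X:ℤ)^k) * (X:ℤ)^(k-1))
              = (2*(k:ℤ)*(Cb:ℤ)*2^k) * ((X:ℤ)^k * (X:ℤ)^(k-1)) := by ring
            _ ≤ (2*(k:ℤ)*(Cb:ℤ)*2^k) * (X:ℤ)^(2*k) :=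
                mul_le_mul_of_nonneg_left hpow (by positivity)
            _ = ((2 * k * Cb * 2^k) * X^(2*k) : ℕ) := by push_cast; ring
  rw [Int.abs_eq_natAbs] at habs
  exact_mod_cast habs

lemma TF_card_le (k r : ℕ) (kk : Fin r → ℕ) (a : Fin r → ℤ) (b : Fin r → ℕ → ℤ)
    (X : ℕ) (NB : ℕ)
    (hN : ∀ h ∈ HF k r kk X, ∀ flag : Bool, ∀ t ∈ Finset.Icc (1:ℤ) (X:ℤ),
      (Nval k r kk a b h flag t).natAbs ≤ NB) :
    (TF k r kk a b X).card ≤ (HF k r kk X).card * (2 * X) *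
      ((2 * ((Finset.Icc 1 NB).sup (fun n => n.divisors.card)))^k *
        (Finset.univ : Finset (Fin k → Fin k)).card) := by
  classical
  set D := (Finset.Icc 1 NB).sup (fun n => n.divisors.card) with hD
  rw [TF]
  calc ((HF k r kk X ×ˢ (Finset.univ : Finset Bool) ×ˢ Finset.Icc (1:ℤ) (X:ℤ)).biUnion
      (fun q => {q.1} ×ˢ {q.2.1} ×ˢ {q.2.2} ×ˢ
        Fintype.piFinset (fun _ : Fin k => intDivisors (Nval k r kk a b q.1 q.2.1 q.2.2)) ×ˢ
        (Finset.univ : Finset (Fin k → Fin k)))).card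
      ≤ ∑ q ∈ HF k r kk X ×ˢ (Finset.univ : Finset Bool) ×ˢ Finset.Icc (1:ℤ) (X:ℤ),
        ({q.1} ×ˢ {q.2.1} ×ˢ {q.2.2} ×ˢ
          Fintype.piFinset (fun _ : Fin k => intDivisors (Nval k r kk a b q.1 q.2.1 q.2.2)) ×ˢ
          (Finset.univ : Finset (Fin k → Fin k))).card := Finset.card_biUnion_le
    _ ≤ ∑ _q ∈ HF k r kk X ×ˢ (Finset.univ : Finset Bool) ×ˢ Finset.Icc (1:ℤ) (X:ℤ),
        ((2 * D)^k * (Finset.univ : Finset (Fin k → Fin k)).card) := by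
        apply Finset.sum_le_sum
        rintro ⟨h, flag, t⟩ hq
        rw [Finset.mem_product, Finset.mem_product] at hq
        obtain ⟨hqh, -, hqt⟩ := hq
        rw [Finset.card_product, Finset.card_product, Finset.card_product,
          Finset.card_product, Finset.card_singleton, Finset.card_singleton,
          Finset.card_singleton, one_mul, one_mul, one_mul]
        apply Nat.mul_le_mul_right
        rw [Fintype.card_piFinset]
        calc ∏ _i : Fin k, (intDivisors (Nval k r kk a b h flag t)).card
            = (intDivisors (Nval k r kk a b h flag t)).card ^ k := by
              rw [Finset.prod_const, Finset.card_univ, Fintype.card_fin]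
          _ ≤ (2 * D)^k := by
              apply Nat.pow_le_pow_left
              calc (intDivisors (Nval k r kk a b h flag t)).card
                  ≤ 2 * (Nval k r kk a b h flag t).natAbs.divisors.card :=
                    card_intDivisors _
                _ ≤ 2 * D := by
                    apply Nat.mul_le_mul_left
                    rcases Nat.eq_zero_or_pos (Nval k r kk a b h flag t).natAbs with h0 | h1
                    · rw [h0]; simp
                    · exact Finset.le_sup (f := fun n => n.divisors.card)
                        (Finset.mem_Icc.mpr ⟨h1, hN h hqh flag t hqt⟩)
    _ = (HF k r kk X).card * (2 * X) * ((2 * D)^k *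
        (Finset.univ : Finset (Fin k → Fin k)).card) := by
        rw [Finset.sum_const, Finset.card_product, Finset.card_product, smul_eq_mul]
        have h1 : (Finset.univ : Finset Bool).card = 2 := by simp
        have h2 : (Finset.Icc (1:ℤ) (X:ℤ)).card = X := by
          rw [Int.card_Icc]
          omega
        rw [h1, h2]

lemma natCard_le_TF (k r : ℕ) (kk : Fin r → ℕ)
    (a : Fin r → ℤ) (ha : ∀ j, a j ≠ 0) (b : Fin r → ℕ → ℤ)
    (φ : Fin r → (Fin k → ℤ) → ℤ)
    (hφ : ∀ j z, φ j z =
      a j * esymm k (kk j) z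
        - ∑ l ∈ (compSet k r kk).filter (fun l => l < kk j), b j l * esymm k l z)
    (X : ℕ) :
    Nat.card {p : (Fin k → ℤ) × (Fin k → ℤ) //
      (∀ i, 1 ≤ p.1 i ∧ p.1 i ≤ (X : ℤ)) ∧ (∀ i, 1 ≤ p.2 i ∧ p.2 i ≤ (X : ℤ)) ∧
        ((∀ j, φ j p.1 = φ j p.2) ∧
          ∃ j : Fin k, p.2 j ∉ Set.range p.1 ∨ p.1 j ∉ Set.range p.2)} ≤
    (TF k r kk a b X).card := by
  classical
  have hcoe : Nat.card {q // q ∈ TF k r kk a b X} = (TF k r kk a b X).card := by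
    rw [Nat.card_eq_fintype_card, Fintype.card_coe]
  rw [← hcoe]
  apply Nat.card_le_card_of_injective
    (f := fun p => (⟨enc k r kk p.1,
      enc_mem k r kk a ha b φ hφ X p.1 p.2.1 p.2.2.1 p.2.2.2⟩ :
        {q // q ∈ TF k r kk a b X}))
  intro p p' hpp
  have h2 : enc k r kk p.1 = enc k r kk p'.1 := congrArg Subtype.val hpp
  exact Subtype.ext (enc_inj k r kk a ha b φ hφ p.1 p'.1 p.2.2.2 p'.2.2.2 h2)

/-- master counting bound, all in ℕ. -/
lemma master_bound (k r : ℕ) (kk : Fin r → ℕ)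
    (a : Fin r → ℤ) (ha : ∀ j, a j ≠ 0) (b : Fin r → ℕ → ℤ)
    (φ : Fin r → (Fin k → ℤ) → ℤ)
    (hφ : ∀ j z, φ j z =
      a j * esymm k (kk j) z
        - ∑ l ∈ (compSet k r kk).filter (fun l => l < kk j), b j l * esymm k l z)
    (X : ℕ) (hX : 1 ≤ X) :
    pairCount k X (fun x y => (∀ j, φ j x = φ j y) ∧
        ∃ j : Fin k, y j ∉ Set.range x ∨ x j ∉ Set.range y) ≤
      ((∏ m ∈ compSet k r kk, (5 * k.choose m)) * X ^ (∑ m ∈ compSet k r kk, m)) * (2 * X) *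
        ((2 * ((Finset.Icc 1
            ((2 * k * (1 + ∑ j : Fin r, ∑ l ∈ Finset.Icc 1 k, (b j l).natAbs) * 2^k) *
              X^(2*k))).sup (fun n => n.divisors.card)))^k *
          (Finset.univ : Finset (Fin k → Fin k)).card) := by
  have h1 : pairCount k X (fun x y => (∀ j, φ j x = φ j y) ∧
      ∃ j : Fin k, y j ∉ Set.range x ∨ x j ∉ Set.range y) ≤ (TF k r kk a b X).card :=
    natCard_le_TF k r kk a ha b φ hφ X
  have h2 := TF_card_le k r kk a b X
    ((2 * k * (1 + ∑ j : Fin r, ∑ l ∈ Finset.Icc 1 k, (b j l).natAbs) * 2^k) * X^(2*k))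
    (fun h hh flag t ht => Nval_natAbs_le k r kk a b X hX h hh flag t ht)
  have h3 := HF_card_le k r kk X hX
  refine le_trans h1 (le_trans h2 ?_)
  apply Nat.mul_le_mul_right
  apply Nat.mul_le_mul_right
  exact h3

/-- The bound (2.11). With `φ_j(z) = a_j σ_{k_j}(z) − Σ_{l < k_j, l ∈ ℛ} b_{jl} σ_l(z)`,
the number `T_k^†(X;φ)` of non-diagonal solutions, i.e. pairs `(x,y)` with
`1 ≤ x_i, y_i ≤ X` satisfying `φ_j(x) = φ_j(y)` for all `j`, for which some `y_j` avoids
`{x_1,…,x_k}` or some `x_j` avoids `{y_1,…,y_k}`, satisfies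
`T_k^†(X;φ) ≪ X^{w(φ)+1+ε}`. -/
theorem nondiagonal_bound (k r : ℕ) (hr : 0 < r) (kk : Fin r → ℕ)
    (hmono : StrictMono kk) (hfirst : 1 ≤ kk ⟨0, hr⟩)
    (hlast : kk ⟨r - 1, Nat.sub_lt hr Nat.one_pos⟩ = k)
    (a : Fin r → ℤ) (ha : ∀ j, a j ≠ 0) (b : Fin r → ℕ → ℤ)
    (φ : Fin r → (Fin k → ℤ) → ℤ)
    (hφ : ∀ j z, φ j z =
      a j * esymm k (kk j) z
        - ∑ l ∈ (compSet k r kk).filter (fun l => l < kk j), b j l * esymm k l z)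
    (ε : ℝ) (hε : 0 < ε) :
    (fun X : ℕ =>
        (pairCount k X (fun x y => (∀ j, φ j x = φ j y) ∧
          ∃ j : Fin k, y j ∉ Set.range x ∨ x j ∉ Set.range y) : ℝ))
      =O[atTop]
      fun X : ℕ => (X : ℝ) ^ ((k * (k + 1) : ℝ) / 2 - (∑ j, (kk j : ℝ)) + 1 + ε) := by
  classical
  have himg : ∀ j, kk j ∈ Finset.Icc 1 k := by
    intro j
    rw [Finset.mem_Icc]
    constructor
    · calc 1 ≤ kk ⟨0, hr⟩ := hfirst
        _ ≤ kk j := hmono.monotone (by simp [Fin.le_def])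
    · calc kk j ≤ kk ⟨r - 1, Nat.sub_lt hr Nat.one_pos⟩ :=
          hmono.monotone (by simp [Fin.le_def]; omega)
        _ = k := hlast
  have hk : 1 ≤ k := by
    have := himg ⟨r - 1, Nat.sub_lt hr Nat.one_pos⟩
    rw [Finset.mem_Icc] at this
    omega
  set w : ℕ := ∑ m ∈ compSet k r kk, m with hwdef
  have hsum_Icc : (∑ m ∈ Finset.Icc 1 k, m) * 2 = k * (k+1) := by
    have h1 : Finset.range (k+1) = insert 0 (Finset.Icc 1 k) := by
      ext n; simp only [Finset.mem_range, Finset.mem_insert, Finset.mem_Icc]; omega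
    have h2 := Finset.sum_range_id_mul_two (k+1)
    rw [h1, Finset.sum_insert (by simp)] at h2
    simpa [mul_comm] using h2
  have hw_nat : w + (∑ j, kk j) = ∑ m ∈ Finset.Icc 1 k, m := by
    have hsub : Finset.image kk Finset.univ ⊆ Finset.Icc 1 k := by
      intro m hm
      obtain ⟨j, _, rfl⟩ := Finset.mem_image.mp hm
      exact himg j
    have h1 := Finset.sum_sdiff (f := fun m : ℕ => m) hsub
    have h2 : ∑ m ∈ Finset.image kk Finset.univ, m = ∑ j, kk j :=
      Finset.sum_image (fun j _ j' _ h => hmono.injective h)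
    rw [← h1, h2]
    simp [hwdef, compSet]
  have hwR : (w:ℝ) = (k * (k + 1) : ℝ) / 2 - (∑ j, (kk j : ℝ)) := by
    have h1 : ((∑ m ∈ Finset.Icc 1 k, m : ℕ) : ℝ) * 2 = (k:ℝ) * ((k:ℝ)+1) := by
      exact_mod_cast congrArg (fun n : ℕ => (n:ℝ)) hsum_Icc
    have h2 : ((w + (∑ j, kk j) : ℕ) : ℝ) = ((∑ m ∈ Finset.Icc 1 k, m : ℕ) : ℝ) := by
      exact_mod_cast congrArg (fun n : ℕ => (n:ℝ)) hw_nat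
    push_cast at h1 h2 ⊢
    linarith
  -- real constants
  set δ' : ℝ := ε / (2*(k:ℝ)*(k:ℝ)) with hδ'def
  have hkR : (1:ℝ) ≤ (k:ℝ) := by exact_mod_cast hk
  have hδ'pos : 0 < δ' := by
    apply div_pos hε
    nlinarith
  obtain ⟨Cd, hCd1, hCd⟩ := divisor_bound hδ'pos
  set NB : ℕ := 2 * k * (1 + ∑ j : Fin r, ∑ l ∈ Finset.Icc 1 k, (b j l).natAbs) * 2^k
    with hNBdef
  set CP : ℕ := ∏ m ∈ compSet k r kk, (5 * k.choose m) with hCPdef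
  set KK : ℕ := (Finset.univ : Finset (Fin k → Fin k)).card with hKKdef
  have hNB1 : 1 ≤ NB := by
    have h0 : 0 < NB := by
      rw [hNBdef]
      exact Nat.mul_pos (Nat.mul_pos (by omega)
        (Nat.lt_of_lt_of_le Nat.zero_lt_one (Nat.le_add_right 1 _)))
        (Nat.pow_pos (by norm_num))
    omega
  -- pointwise real bound
  have master : ∀ X : ℕ, 1 ≤ X →
      (pairCount k X (fun x y => (∀ j, φ j x = φ j y) ∧
        ∃ j : Fin k, y j ∉ Set.range x ∨ x j ∉ Set.range y) : ℝ) ≤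
      ((CP : ℝ) * 2 * (KK:ℝ) * (2 * Cd * (NB:ℝ)^δ')^k) * (X:ℝ)^((w:ℝ) + 1 + ε) := by
    intro X hX
    have hXpos : (0:ℝ) < (X:ℝ) := by exact_mod_cast Nat.lt_of_lt_of_le Nat.zero_lt_one hX
    set DX : ℕ := (Finset.Icc 1 (NB * X^(2*k))).sup (fun n => n.divisors.card) with hDXdef
    have hnat := master_bound k r kk a ha b φ hφ X hX
    rw [← hNBdef] at hnat
    rw [← hCPdef] at hnat
    rw [← hKKdef] at hnat
    rw [← hwdef] at hnat
    rw [← hDXdef] at hnat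
    -- bound DX over ℝ
    have hDX : (DX : ℝ) ≤ Cd * (NB:ℝ)^δ' * (X:ℝ)^(2*(k:ℝ)*δ') := by
      have hne : (Finset.Icc 1 (NB * X^(2*k))).Nonempty := by
        refine ⟨1, Finset.mem_Icc.mpr ⟨le_refl 1, ?_⟩⟩
        have hXk : 1 ≤ X^(2*k) := Nat.one_le_pow _ _ hX
        exact Nat.one_le_iff_ne_zero.mpr (by positivity)
      obtain ⟨n0, hn0, hsup⟩ := Finset.exists_mem_eq_sup _ hne (fun n => n.divisors.card)
      rw [hDXdef, hsup]
      obtain ⟨hn01, hn0M⟩ := Finset.mem_Icc.mp hn0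
      calc ((n0.divisors.card : ℕ) : ℝ) ≤ Cd * (n0:ℝ)^δ' := hCd n0 (Nat.one_le_iff_ne_zero.mp hn01)
        _ ≤ Cd * ((NB * X^(2*k) : ℕ) : ℝ)^δ' := by
            apply mul_le_mul_of_nonneg_left _ (by linarith)
            apply Real.rpow_le_rpow (by positivity) (by exact_mod_cast hn0M) hδ'pos.le
        _ = Cd * (NB:ℝ)^δ' * (X:ℝ)^(2*(k:ℝ)*δ') := by
            push_cast
            rw [Real.mul_rpow (by positivity) (by positivity), mul_assoc]
            congr 1
            congr 1
            rw [← Real.rpow_natCast (X:ℝ) (2*k), ← Real.rpow_mul (by positivity)]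
            congr 1
            push_cast
            ring
    have hsplit : (X:ℝ)^((w:ℝ) + 1 + ε) = (X:ℝ)^(w:ℕ) * (X:ℝ) * (X:ℝ)^ε := by
      rw [Real.rpow_add hXpos, Real.rpow_add hXpos, Real.rpow_one, Real.rpow_natCast]
    have hDXk : ((2 * DX : ℕ) : ℝ)^k ≤ (2 * Cd * (NB:ℝ)^δ')^k * (X:ℝ)^ε := by
      have h1 : ((2 * DX : ℕ) : ℝ) ≤ (2 * Cd * (NB:ℝ)^δ') * (X:ℝ)^(2*(k:ℝ)*δ') := by
        push_cast
        calc (2:ℝ) * DX ≤ 2 * (Cd * (NB:ℝ)^δ' * (X:ℝ)^(2*(k:ℝ)*δ')) :=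
              mul_le_mul_of_nonneg_left hDX (by norm_num)
          _ = (2 * Cd * (NB:ℝ)^δ') * (X:ℝ)^(2*(k:ℝ)*δ') := by ring
      calc ((2 * DX : ℕ) : ℝ)^k ≤ ((2 * Cd * (NB:ℝ)^δ') * (X:ℝ)^(2*(k:ℝ)*δ'))^k :=
            pow_le_pow_left₀ (by positivity) h1 k
        _ = (2 * Cd * (NB:ℝ)^δ')^k * ((X:ℝ)^(2*(k:ℝ)*δ'))^k := mul_pow _ _ _
        _ = (2 * Cd * (NB:ℝ)^δ')^k * (X:ℝ)^ε := by
            congr 1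
            rw [← Real.rpow_natCast ((X:ℝ)^(2*(k:ℝ)*δ')) k, ← Real.rpow_mul hXpos.le]
            congr 1
            rw [hδ'def]
            have hkne : (k:ℝ) ≠ 0 := by positivity
            field_simp
    have hcast : ((((CP * X ^ w) * (2 * X)) * ((2 * DX)^k * KK) : ℕ) : ℝ)
        = (CP:ℝ) * (X:ℝ)^(w:ℕ) * (2 * (X:ℝ)) * (((2*DX:ℕ):ℝ)^k * (KK:ℝ)) := by
      push_cast
      ring
    calc (pairCount k X (fun x y => (∀ j, φ j x = φ j y) ∧
          ∃ j : Fin k, y j ∉ Set.range x ∨ x j ∉ Set.range y) : ℝ)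
        ≤ ((((CP * X ^ w) * (2 * X)) * ((2 * DX)^k * KK) : ℕ) : ℝ) := by exact_mod_cast hnat
      _ = (CP:ℝ) * (X:ℝ)^(w:ℕ) * (2 * (X:ℝ)) * (((2*DX:ℕ):ℝ)^k * (KK:ℝ)) := hcast
      _ ≤ (CP:ℝ) * (X:ℝ)^(w:ℕ) * (2 * (X:ℝ)) *
          (((2 * Cd * (NB:ℝ)^δ')^k * (X:ℝ)^ε) * (KK:ℝ)) := by
          apply mul_le_mul_of_nonneg_left _ (by positivity)
          exact mul_le_mul_of_nonneg_right hDXk (by positivity)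
      _ = ((CP : ℝ) * 2 * (KK:ℝ) * (2 * Cd * (NB:ℝ)^δ')^k) *
          ((X:ℝ)^(w:ℕ) * (X:ℝ) * (X:ℝ)^ε) := by ring
      _ = ((CP : ℝ) * 2 * (KK:ℝ) * (2 * Cd * (NB:ℝ)^δ')^k) * (X:ℝ)^((w:ℝ) + 1 + ε) := by
          rw [hsplit]
  -- conclude
  rw [Asymptotics.isBigO_iff]
  refine ⟨(CP : ℝ) * 2 * (KK:ℝ) * (2 * Cd * (NB:ℝ)^δ')^k, ?_⟩
  filter_upwards [Filter.eventually_ge_atTop 1] with X hX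
  have hexp : (X:ℝ) ^ ((k * (k + 1) : ℝ) / 2 - (∑ j, (kk j : ℝ)) + 1 + ε)
      = (X:ℝ) ^ ((w:ℝ) + 1 + ε) := by rw [hwR]
  rw [hexp, Real.norm_eq_abs, Real.norm_eq_abs]
  have h1 := master X hX
  have h2 : (0:ℝ) ≤ (X:ℝ)^((w:ℝ) + 1 + ε) := Real.rpow_nonneg (by positivity) _
  rw [abs_of_nonneg (by positivity), abs_of_nonneg h2]
  exact h1
end
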